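/- Fix k ≥ 2. The map sending a planar tree τ with k labeled leaves to the pair (|w|, (S_1(τ), ..., S_{|π|}(τ))), where w is the most recent common ancestor of all k leaves, π = π(τ) is the partition of {1,...,k} grouping leaf indices that remain connected after removing w, and S_i(τ) is the i-th subtree attached at w, is a bijection from the set of planar trees with k leaves onto the disjoint union over all partitions π of {1,...,k} into consecutive-integer blocks with |π| ≥ 2, of ℕ × (T_{|π_1|} × ... × T_{|π_{|π|}|}), where T_j denotes the set of planar trees with j leaves. -/

import Mathlib

open scoped Classical

noncomputable section

/-- A (finite) rooted planar tree, encoded as a prefix-closed finite set of words over ℕ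
containing the root `[]`, with children of each vertex indexed consecutively. -/
def IsPlanarTree (τ : Finset (List ℕ)) : Prop :=
  [] ∈ τ ∧ (∀ v w : List ℕ, v <+: w → w ∈ τ → v ∈ τ) ∧
    ∀ v : List ℕ, ∃ d : ℕ, ∀ i : ℕ, v ++ [i] ∈ τ ↔ i < d

/-- The leaves of a set of words: its maximal elements for the prefix order. -/
def leavesOf (s : Finset (List ℕ)) : Finset (List ℕ) :=
  s.filter fun v => ∀ w ∈ s, v <+: w → w = v

/-- Longest common prefix of two words. -/
def commonPrefix : List ℕ → List ℕ → List ℕ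
  | a :: v, b :: w => if a = b then a :: commonPrefix v w else []
  | _, _ => []

/-- Longest common prefix of a list of words. -/
def listMRCA : List (List ℕ) → List ℕ
  | [] => []
  | x :: xs => xs.foldl commonPrefix x

/-- The most recent common ancestor of all the leaves of a tree (its first branch point
when the tree has at least two leaves). -/
def treeMRCA (τ : Finset (List ℕ)) : List ℕ :=
  listMRCA ((leavesOf τ).sort (· ≤ ·))

/-- The subtree of `τ` rooted at the vertex `u`, relabeled so that `u` becomes the root. -/
def subtreeAt (τ : Finset (List ℕ)) (u : List ℕ) : Finset (List ℕ) :=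
  (τ.filter fun v => u <+: v).image fun v => v.drop u.length

/-- Planar trees with `j` (labeled) leaves. -/
def PTree (j : ℕ) := {τ : Finset (List ℕ) // IsPlanarTree τ ∧ (leavesOf τ).card = j}

/-- Partitions of `{1, …, k}` into blocks of consecutive integers with at least two blocks,
encoded as compositions of `k` of length `≥ 2`. -/
def ConsecComposition (k : ℕ) :=
  {c : List ℕ // (∀ x ∈ c, 0 < x) ∧ c.sum = k ∧ 2 ≤ c.length}

lemma commonPrefix_prefix_left : ∀ a b : List ℕ, commonPrefix a b <+: a
  | [], b => by simp [commonPrefix]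
  | a :: v, [] => by simp [commonPrefix]
  | a :: v, b :: w => by
    by_cases h : a = b
    · simpa [commonPrefix, h] using commonPrefix_prefix_left v w
    · simp [commonPrefix, h]

lemma commonPrefix_prefix_right : ∀ a b : List ℕ, commonPrefix a b <+: b
  | [], b => by simp [commonPrefix]
  | a :: v, [] => by simp [commonPrefix]
  | a :: v, b :: w => by
    by_cases h : a = b
    · subst h; simpa [commonPrefix] using commonPrefix_prefix_right v w
    · simp [commonPrefix, h]

lemma prefix_commonPrefix : ∀ p a b : List ℕ, p <+: a → p <+: b → p <+: commonPrefix a b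
  | [], a, b, _, _ => by simp
  | c :: p, a :: v, b :: w, h1, h2 => by
    rw [List.cons_prefix_cons] at h1 h2
    obtain ⟨rfl, h1⟩ := h1
    obtain ⟨rfl, h2⟩ := h2
    simpa [commonPrefix, List.cons_prefix_cons] using prefix_commonPrefix p v w h1 h2
  | c :: p, [], b, h1, _ => by simp at h1
  | c :: p, a :: v, [], _, h2 => by simp at h2

lemma foldl_commonPrefix_prefix (l : List (List ℕ)) (a : List ℕ) :
    l.foldl commonPrefix a <+: a ∧ ∀ y ∈ l, l.foldl commonPrefix a <+: y := by
  induction l generalizing a with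
  | nil => simp
  | cons x xs ih =>
    obtain ⟨h1, h2⟩ := ih (commonPrefix a x)
    refine ⟨h1.trans (commonPrefix_prefix_left a x), ?_⟩
    intro y hy
    rcases List.mem_cons.1 hy with rfl | hy
    · exact h1.trans (commonPrefix_prefix_right a y)
    · exact h2 y hy

lemma prefix_foldl_commonPrefix (l : List (List ℕ)) (a p : List ℕ) (ha : p <+: a)
    (h : ∀ y ∈ l, p <+: y) : p <+: l.foldl commonPrefix a := by
  induction l generalizing a with
  | nil => simpa using ha
  | cons x xs ih =>
    exact ih (commonPrefix a x) (prefix_commonPrefix p a x ha (h x (by simp)))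
      fun y hy => h y (by simp [hy])

lemma listMRCA_prefix (l : List (List ℕ)) (y : List ℕ) (hy : y ∈ l) : listMRCA l <+: y := by
  cases l with
  | nil => simp at hy
  | cons x xs =>
    rcases List.mem_cons.1 hy with rfl | hy
    · exact (foldl_commonPrefix_prefix xs y).1
    · exact (foldl_commonPrefix_prefix xs x).2 y hy

lemma prefix_listMRCA (l : List (List ℕ)) (hl : l ≠ []) (p : List ℕ)
    (h : ∀ y ∈ l, p <+: y) : p <+: listMRCA l := by
  cases l with
  | nil => simp at hl
  | cons x xs => exact prefix_foldl_commonPrefix xs x p (h x (by simp)) fun y hy => h y (by simp [hy])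

lemma exists_leaf_above (s : Finset (List ℕ)) (v : List ℕ) (hv : v ∈ s) :
    ∃ l ∈ leavesOf s, v <+: l := by
  have hne : (s.filter fun u => v <+: u).Nonempty := ⟨v, by simp [hv]⟩
  obtain ⟨l, hl, hmax⟩ := (s.filter fun u => v <+: u).exists_max_image List.length hne
  simp only [Finset.mem_filter] at hl
  refine ⟨l, ?_, hl.2⟩
  simp only [leavesOf, Finset.mem_filter]
  refine ⟨hl.1, fun z hz hlz => ?_⟩
  have hz' : z ∈ s.filter fun u => v <+: u := by simp [hz, hl.2.trans hlz]
  exact (hlz.eq_of_length_le (hmax z hz')).symm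

lemma mem_subtreeAt (τ : Finset (List ℕ)) (u x : List ℕ) :
    x ∈ subtreeAt τ u ↔ u ++ x ∈ τ := by
  simp only [subtreeAt, Finset.mem_image, Finset.mem_filter]
  constructor
  · rintro ⟨z, ⟨hz, hpre⟩, rfl⟩
    obtain ⟨t, rfl⟩ := hpre
    simpa using hz
  · intro h
    exact ⟨u ++ x, ⟨h, by simp⟩, by simp⟩

lemma leaf_subtreeAt (τ : Finset (List ℕ)) (u x : List ℕ) (hu : u ∈ τ) :
    x ∈ leavesOf (subtreeAt τ u) ↔ u ++ x ∈ leavesOf τ := by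
  simp only [leavesOf, Finset.mem_filter, mem_subtreeAt]
  constructor
  · rintro ⟨h1, h2⟩
    refine ⟨h1, fun z hz hpre => ?_⟩
    obtain ⟨t, rfl⟩ := hpre
    have := h2 (x ++ t) (by simpa using hz) (by simp)
    rw [List.append_assoc, this]
  · rintro ⟨h1, h2⟩
    refine ⟨h1, fun y hy hpre => ?_⟩
    have := h2 (u ++ y) hy (by simpa using hpre)
    exact (List.append_right_inj u).mp this

lemma isPlanarTree_subtreeAt (τ : Finset (List ℕ)) (h : IsPlanarTree τ) (u : List ℕ)
    (hu : u ∈ τ) : IsPlanarTree (subtreeAt τ u) := by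
  refine ⟨by simpa [mem_subtreeAt], fun v w hvw hw => ?_, fun v => ?_⟩
  · rw [mem_subtreeAt] at hw ⊢
    exact h.2.1 _ _ ((List.prefix_append_right_inj u).mpr hvw) hw
  · obtain ⟨d, hd⟩ := h.2.2 (u ++ v)
    exact ⟨d, fun i => by rw [mem_subtreeAt, ← List.append_assoc]; exact hd i⟩

lemma treeMRCA_prefix_leaf (τ : Finset (List ℕ)) (l : List ℕ) (hl : l ∈ leavesOf τ) :
    treeMRCA τ <+: l :=
  listMRCA_prefix _ l (by simpa [Finset.mem_sort])

lemma prefix_treeMRCA (τ : Finset (List ℕ)) (hne : (leavesOf τ).Nonempty) (p : List ℕ)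
    (h : ∀ l ∈ leavesOf τ, p <+: l) : p <+: treeMRCA τ := by
  refine prefix_listMRCA _ ?_ p fun y hy => h y (by simpa [Finset.mem_sort] using hy)
  intro hnil
  obtain ⟨l, hl⟩ := hne
  have : l ∈ (leavesOf τ).sort (· ≤ ·) := by simpa [Finset.mem_sort]
  rw [hnil] at this
  simp at this

lemma leavesOf_subset (τ : Finset (List ℕ)) : leavesOf τ ⊆ τ := Finset.filter_subset _ _

lemma treeMRCA_mem (τ : Finset (List ℕ)) (h : IsPlanarTree τ) (hne : (leavesOf τ).Nonempty) :
    treeMRCA τ ∈ τ := by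
  obtain ⟨l, hl⟩ := hne
  exact h.2.1 _ _ (treeMRCA_prefix_leaf τ l hl) (leavesOf_subset τ hl)

lemma leaf_strict_ext (τ : Finset (List ℕ)) (hcard : 2 ≤ (leavesOf τ).card)
    (l : List ℕ) (hl : l ∈ leavesOf τ) : ∃ a r, l = treeMRCA τ ++ a :: r := by
  have hpre := treeMRCA_prefix_leaf τ l hl
  obtain ⟨t, ht⟩ := hpre
  rcases t with _ | ⟨a, r⟩
  · exfalso
    obtain ⟨l1, hl1, l2, hl2, hne⟩ := Finset.one_lt_card.mp hcard
    have p1 := treeMRCA_prefix_leaf τ l1 hl1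
    have p2 := treeMRCA_prefix_leaf τ l2 hl2
    simp only [leavesOf, Finset.mem_filter] at hl hl1 hl2
    have h1 : l1 = l := hl.2 l1 hl1.1 (by rw [← ht]; simpa using p1)
    have h2 : l2 = l := hl.2 l2 hl2.1 (by rw [← ht]; simpa using p2)
    exact hne (h1.trans h2.symm)
  · exact ⟨a, r, ht.symm⟩

lemma exists_two_children (τ : Finset (List ℕ)) (h : IsPlanarTree τ)
    (hcard : 2 ≤ (leavesOf τ).card) :
    ∃ a b : ℕ, a ≠ b ∧ treeMRCA τ ++ [a] ∈ τ ∧ treeMRCA τ ++ [b] ∈ τ := by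
  have hne : (leavesOf τ).Nonempty := Finset.card_pos.mp (by omega)
  obtain ⟨l0, hl0⟩ := hne
  obtain ⟨a0, r0, he0⟩ := leaf_strict_ext τ hcard l0 hl0
  by_contra hcon
  push_neg at hcon
  have hall : ∀ l ∈ leavesOf τ, treeMRCA τ ++ [a0] <+: l := by
    intro l hl
    obtain ⟨a, r, he⟩ := leaf_strict_ext τ hcard l hl
    have ha : a = a0 := by
      by_contra hne'
      exact hcon a a0 hne' (h.2.1 _ _ ⟨r, by rw [he]; simp⟩ (leavesOf_subset τ hl))
        (h.2.1 _ _ ⟨r0, by rw [he0]; simp⟩ (leavesOf_subset τ hl0))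
    rw [he, ha]
    exact ⟨r, by simp⟩
  have := prefix_treeMRCA τ ⟨l0, hl0⟩ _ hall
  have hlen := this.length_le
  simp at hlen

lemma treeMRCA_replicate (τ : Finset (List ℕ)) (h : IsPlanarTree τ)
    (hcard : 2 ≤ (leavesOf τ).card) :
    treeMRCA τ = List.replicate (treeMRCA τ).length 0 := by
  have hne : (leavesOf τ).Nonempty := Finset.card_pos.mp (by omega)
  have hw : treeMRCA τ ∈ τ := treeMRCA_mem τ h hne
  have key : ∀ v u : List ℕ, u ++ v = treeMRCA τ → v = List.replicate v.length 0 := by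
    intro v
    induction v with
    | nil => simp
    | cons a r ih =>
      intro u hu
      have huaτ : u ++ [a] ∈ τ := h.2.1 _ _ ⟨r, by simp [← hu]⟩ hw
      obtain ⟨du, hdu⟩ := h.2.2 u
      have ha' : a < du := (hdu a).mp huaτ
      have h0 : u ++ [0] ∈ τ := (hdu 0).mpr (by omega)
      obtain ⟨l, hl, hpre⟩ := exists_leaf_above τ (u ++ [0]) h0
      have hwl : treeMRCA τ <+: l := treeMRCA_prefix_leaf τ l hl
      have hlen : (u ++ [0]).length ≤ (treeMRCA τ).length := by
        simp [← hu]
      have h0w : u ++ [0] <+: treeMRCA τ := by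
        rcases List.prefix_or_prefix_of_prefix hpre hwl with hc | hc
        · exact hc
        · exact (hc.eq_of_length_le hlen) ▸ List.prefix_refl _
      have hstrip : [0] <+: a :: r := by
        rw [← hu] at h0w
        exact (List.prefix_append_right_inj u).mp h0w
      have ha0 : a = 0 := by
        obtain ⟨t, ht⟩ := hstrip
        simp at ht
        exact ht.1.symm
      subst ha0
      have hr : r = List.replicate r.length 0 := ih (u ++ [0]) (by simpa using hu)
      rw [List.length_cons, List.replicate_succ, ← hr]
  exact key (treeMRCA τ) [] (by simp)

lemma mem_tree_cases (τ : Finset (List ℕ)) (hne : (leavesOf τ).Nonempty)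
    (v : List ℕ) (hv : v ∈ τ) :
    v <+: treeMRCA τ ∨ ∃ i r, v = treeMRCA τ ++ i :: r := by
  obtain ⟨l, hl, hpre⟩ := exists_leaf_above τ v hv
  rcases List.prefix_or_prefix_of_prefix hpre (treeMRCA_prefix_leaf τ l hl) with hc | hc
  · exact Or.inl hc
  · obtain ⟨t, ht⟩ := hc
    rcases t with _ | ⟨i, r⟩
    · left
      simp only [List.append_nil] at ht
      rw [← ht]
    · exact Or.inr ⟨i, r, ht.symm⟩

lemma card_leaves_eq_sum (τ : Finset (List ℕ)) (h : IsPlanarTree τ)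
    (hcard : 2 ≤ (leavesOf τ).card) (d : ℕ)
    (hd : ∀ i, treeMRCA τ ++ [i] ∈ τ ↔ i < d) :
    (leavesOf τ).card = ∑ i ∈ Finset.range d, (leavesOf (subtreeAt τ (treeMRCA τ ++ [i]))).card := by
  set w := treeMRCA τ with hwdef
  have hfval : ∀ (a : ℕ) (r : List ℕ), ((w ++ a :: r).drop w.length).headI = a := by
    intro a r
    rw [List.drop_left]
    rfl
  have hfib : ∀ l ∈ leavesOf τ, (l.drop w.length).headI ∈ Finset.range d := by
    intro l hl
    obtain ⟨a, r, rfl⟩ := leaf_strict_ext τ hcard l hl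
    rw [hfval, Finset.mem_range, ← hd]
    exact h.2.1 _ _ ⟨r, by simp [hwdef]⟩ (leavesOf_subset τ hl)
  rw [Finset.card_eq_sum_card_fiberwise hfib]
  refine Finset.sum_congr rfl fun i hi => ?_
  have hiw : w ++ [i] ∈ τ := (hd i).mpr (Finset.mem_range.mp hi)
  have himg : (leavesOf τ).filter (fun l => (l.drop w.length).headI = i)
      = (leavesOf (subtreeAt τ (w ++ [i]))).image (fun x => (w ++ [i]) ++ x) := by
    ext l
    simp only [Finset.mem_filter, Finset.mem_image]
    constructor
    · rintro ⟨hl, hfl⟩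
      obtain ⟨a, r, rfl⟩ := leaf_strict_ext τ hcard _ hl
      rw [hfval] at hfl
      subst hfl
      exact ⟨r, (leaf_subtreeAt τ (w ++ [a]) r hiw).mpr (by simpa using hl), by simp [hwdef]⟩
    · rintro ⟨x, hx, rfl⟩
      have := (leaf_subtreeAt τ (w ++ [i]) x hiw).mp hx
      exact ⟨this, by simpa using hfval i x⟩
  rw [himg, Finset.card_image_of_injective _ (List.append_right_injective _)]

lemma prefix_replicate_eq {v : List ℕ} {n : ℕ} (h : v <+: List.replicate n 0) :
    v = List.replicate v.length 0 :=
  List.eq_replicate_iff.mpr ⟨rfl, fun b hb => List.eq_of_mem_replicate (h.sublist.subset hb)⟩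

lemma replicate_prefix_replicate {j n : ℕ} (h : j ≤ n) :
    List.replicate j (0:ℕ) <+: List.replicate n 0 :=
  ⟨List.replicate (n - j) 0, by rw [← List.replicate_add]; congr 1; omega⟩

def pathSet (n : ℕ) : Finset (List ℕ) := (Finset.range (n+1)).image fun j => List.replicate j 0

lemma mem_pathSet (n : ℕ) (v : List ℕ) : v ∈ pathSet n ↔ v <+: List.replicate n 0 := by
  simp only [pathSet, Finset.mem_image, Finset.mem_range]
  constructor
  · rintro ⟨j, hj, rfl⟩
    exact ⟨List.replicate (n - j) 0, by rw [← List.replicate_add]; congr 1; omega⟩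
  · intro hpre
    have hlen : v.length ≤ n := by simpa using hpre.length_le
    exact ⟨v.length, by omega, (prefix_replicate_eq hpre).symm⟩

def buildTree (n d : ℕ) (S : ℕ → Finset (List ℕ)) : Finset (List ℕ) :=
  pathSet n ∪ (Finset.range d).biUnion fun i => (S i).image fun x => (List.replicate n 0 ++ [i]) ++ x

lemma mem_buildTree (n d : ℕ) (S : ℕ → Finset (List ℕ)) (v : List ℕ) :
    v ∈ buildTree n d S ↔
      v <+: List.replicate n 0 ∨ ∃ i < d, ∃ x ∈ S i, v = List.replicate n 0 ++ i :: x := by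
  simp only [buildTree, Finset.mem_union, Finset.mem_biUnion, Finset.mem_range, mem_pathSet,
    Finset.mem_image]
  constructor
  · rintro (hp | ⟨i, hi, x, hx, rfl⟩)
    · exact Or.inl hp
    · exact Or.inr ⟨i, hi, x, hx, by simp⟩
  · rintro (hp | ⟨i, hi, x, hx, rfl⟩)
    · exact Or.inl hp
    · exact Or.inr ⟨i, hi, x, hx, by simp⟩

lemma buildTree_prefix_closed (n d : ℕ) (S : ℕ → Finset (List ℕ))
    (hS : ∀ i < d, IsPlanarTree (S i)) :
    ∀ v z : List ℕ, v <+: z → z ∈ buildTree n d S → v ∈ buildTree n d S := by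
  intro v z hvz hz
  rw [mem_buildTree] at hz ⊢
  rcases hz with hp | ⟨i, hi, x, hx, rfl⟩
  · exact Or.inl (hvz.trans hp)
  · by_cases hlen : v.length ≤ n
    · left
      have hw : List.replicate n 0 <+: List.replicate n 0 ++ i :: x := ⟨i :: x, rfl⟩
      rcases List.prefix_or_prefix_of_prefix hvz hw with hc | hc
      · exact hc
      · exact (hc.eq_of_length_le (by simpa using hlen)) ▸ List.prefix_refl _
    · right
      have hw : List.replicate n 0 <+: v := by
        have hw' : List.replicate n 0 <+: List.replicate n 0 ++ i :: x := ⟨i :: x, rfl⟩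
        rcases List.prefix_or_prefix_of_prefix hvz hw' with hc | hc
        · exact absurd (by simpa using hc.length_le) hlen
        · exact hc
      obtain ⟨t, rfl⟩ := hw
      have ht : t <+: i :: x := (List.prefix_append_right_inj _).mp hvz
      rcases t with _ | ⟨j, y⟩
      · simp at hlen
      · rw [List.cons_prefix_cons] at ht
        obtain ⟨rfl, hyx⟩ := ht
        exact ⟨j, hi, y, (hS j hi).2.1 y x hyx hx, rfl⟩

lemma prefix_replicate_mem (n : ℕ) (d : ℕ) (S : ℕ → Finset (List ℕ)) (v : List ℕ)
    (h : v <+: List.replicate n 0) : v ∈ buildTree n d S :=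
  (mem_buildTree n d S v).mpr (Or.inl h)

lemma isPlanarTree_buildTree (n d : ℕ) (S : ℕ → Finset (List ℕ))
    (hS : ∀ i < d, IsPlanarTree (S i)) (hd : 1 ≤ d) :
    IsPlanarTree (buildTree n d S) := by
  have hpc := buildTree_prefix_closed n d S hS
  refine ⟨prefix_replicate_mem n d S [] (by simp), hpc, ?_⟩
  intro v
  by_cases hv : v ∈ buildTree n d S
  swap
  · exact ⟨0, fun i => by
      simp only [Nat.not_lt_zero, iff_false]
      exact fun hmem => hv (hpc v (v ++ [i]) (by simp) hmem)⟩
  rw [mem_buildTree] at hv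
  rcases hv with hp | ⟨i, hi, x, hx, rfl⟩
  · by_cases hveq : v.length = n
    · -- v = replicate n 0
      have hv' : v = List.replicate n 0 := hp.eq_of_length_le (by simp [hveq])
      subst hv'
      refine ⟨d, fun i => ?_⟩
      rw [mem_buildTree]
      constructor
      · rintro (hc | ⟨j, hj, y, hy, heq⟩)
        · exfalso
          have hle := hc.length_le
          simp only [List.length_append, List.length_replicate, List.length_cons] at hle
          omega
        · rw [List.append_right_inj] at heq
          simp only [List.cons.injEq] at heq
          obtain ⟨rfl, rfl⟩ := heq
          exact hj
      · intro hid
        exact Or.inr ⟨i, hid, [], (hS i hid).1, rfl⟩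
    · -- v a strict prefix of replicate n 0
      have hlt : v.length < n := by
        have := hp.length_le
        simp only [List.length_replicate] at this
        omega
      have hv0 : v = List.replicate v.length 0 := prefix_replicate_eq hp
      refine ⟨1, fun i => ?_⟩
      rw [mem_buildTree]
      constructor
      · rintro (hc | ⟨j, hj, y, hy, heq⟩)
        · -- v ++ [i] <+: replicate n 0, so i = 0
          have hi0 : i = 0 := List.eq_of_mem_replicate (hc.sublist.subset (by simp))
          omega
        · exfalso
          have := congrArg List.length heq
          simp at this
          omega
      · intro hi1
        have hi0 : i = 0 := by omega
        subst hi0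
        left
        have : v ++ [0] = List.replicate (v.length + 1) 0 := by
          conv_lhs => rw [hv0]
          rw [← List.replicate_succ']
        rw [this]
        exact replicate_prefix_replicate (by omega)
  · -- v = replicate n 0 ++ i :: x
    obtain ⟨ds, hds⟩ := (hS i hi).2.2 x
    refine ⟨ds, fun j => ?_⟩
    rw [← hds j, mem_buildTree]
    constructor
    · rintro (hc | ⟨i', hi', y, hy, heq⟩)
      · exfalso
        have hle := hc.length_le
        simp only [List.length_append, List.length_replicate, List.length_cons] at hle
        omega
      · rw [List.append_assoc, List.cons_append, List.append_right_inj] at heq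
        simp only [List.cons.injEq] at heq
        obtain ⟨rfl, rfl⟩ := heq
        exact hy
    · intro hmem
      exact Or.inr ⟨i, hi, x ++ [j], hmem, by simp⟩

lemma subtreeAt_buildTree (n d : ℕ) (S : ℕ → Finset (List ℕ)) (i : ℕ) (hi : i < d) :
    subtreeAt (buildTree n d S) (List.replicate n 0 ++ [i]) = S i := by
  ext x
  rw [mem_subtreeAt, mem_buildTree]
  constructor
  · rintro (hc | ⟨j, hj, y, hy, heq⟩)
    · exfalso
      have hle := hc.length_le
      simp only [List.length_append, List.length_replicate, List.length_cons] at hle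
      omega
    · rw [List.append_assoc, List.cons_append, List.nil_append, List.append_right_inj] at heq
      simp only [List.cons.injEq] at heq
      obtain ⟨rfl, rfl⟩ := heq
      exact hy
  · intro hx
    exact Or.inr ⟨i, hi, x, hx, by simp⟩

lemma leavesOf_buildTree (n d : ℕ) (S : ℕ → Finset (List ℕ))
    (hS : ∀ i < d, IsPlanarTree (S i)) (hd : 1 ≤ d) :
    leavesOf (buildTree n d S) =
      (Finset.range d).biUnion fun i =>
        (leavesOf (S i)).image fun x => (List.replicate n 0 ++ [i]) ++ x := by
  have hmemw : ∀ i < d, List.replicate n 0 ++ [i] ∈ buildTree n d S := by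
    intro i hi
    rw [mem_buildTree]
    exact Or.inr ⟨i, hi, [], (hS i hi).1, rfl⟩
  ext l
  simp only [Finset.mem_biUnion, Finset.mem_range, Finset.mem_image]
  constructor
  · intro hl
    have hlmem := leavesOf_subset _ hl
    rw [mem_buildTree] at hlmem
    rcases hlmem with hp | ⟨i, hi, x, hx, rfl⟩
    · exfalso
      have h0 : List.replicate n 0 ++ [0] ∈ buildTree n d S := hmemw 0 hd
      simp only [leavesOf, Finset.mem_filter] at hl
      have := hl.2 _ h0 (hp.trans ⟨[0], rfl⟩)
      have hlen := congrArg List.length this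
      have hle := hp.length_le
      simp at hlen hle
      omega
    · refine ⟨i, hi, x, ?_, by simp⟩
      have : x ∈ leavesOf (subtreeAt (buildTree n d S) (List.replicate n 0 ++ [i])) := by
        rw [leaf_subtreeAt _ _ _ (hmemw i hi)]
        simpa using hl
      rwa [subtreeAt_buildTree n d S i hi] at this
  · rintro ⟨i, hi, x, hx, rfl⟩
    rw [← subtreeAt_buildTree n d S i hi] at hx
    exact (leaf_subtreeAt _ _ _ (hmemw i hi)).mp hx

lemma card_leaves_buildTree (n d : ℕ) (S : ℕ → Finset (List ℕ))
    (hS : ∀ i < d, IsPlanarTree (S i)) (hd : 1 ≤ d) :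
    (leavesOf (buildTree n d S)).card = ∑ i ∈ Finset.range d, (leavesOf (S i)).card := by
  rw [leavesOf_buildTree n d S hS hd, Finset.card_biUnion]
  · exact Finset.sum_congr rfl fun i _ =>
      Finset.card_image_of_injective _ (List.append_right_injective _)
  · intro a ha b hb hab
    simp only [Finset.disjoint_left, Finset.mem_image]
    rintro l ⟨x, hx, rfl⟩ ⟨y, hy, heq⟩
    rw [List.append_assoc, List.append_assoc, List.append_right_inj] at heq
    simp only [List.cons_append, List.nil_append, List.cons.injEq] at heq
    exact hab heq.1.symm

lemma treeMRCA_buildTree (n d : ℕ) (S : ℕ → Finset (List ℕ))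
    (hS : ∀ i < d, IsPlanarTree (S i)) (hd : 2 ≤ d)
    (hne : ∀ i < d, (leavesOf (S i)).Nonempty) :
    treeMRCA (buildTree n d S) = List.replicate n 0 := by
  have hleaves := leavesOf_buildTree n d S hS (by omega)
  obtain ⟨x0, hx0⟩ := hne 0 (by omega)
  obtain ⟨x1, hx1⟩ := hne 1 (by omega)
  have hl0 : (List.replicate n 0 ++ [0]) ++ x0 ∈ leavesOf (buildTree n d S) := by
    rw [hleaves]
    simp only [Finset.mem_biUnion, Finset.mem_range, Finset.mem_image]
    exact ⟨0, by omega, x0, hx0, rfl⟩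
  have hl1 : (List.replicate n 0 ++ [1]) ++ x1 ∈ leavesOf (buildTree n d S) := by
    rw [hleaves]
    simp only [Finset.mem_biUnion, Finset.mem_range, Finset.mem_image]
    exact ⟨1, by omega, x1, hx1, rfl⟩
  have hpre : List.replicate n 0 <+: treeMRCA (buildTree n d S) := by
    refine prefix_treeMRCA _ ⟨_, hl0⟩ _ ?_
    intro l hl
    rw [hleaves] at hl
    simp only [Finset.mem_biUnion, Finset.mem_range, Finset.mem_image] at hl
    obtain ⟨i, hi, x, hx, rfl⟩ := hl
    exact ⟨i :: x, by simp⟩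
  obtain ⟨t, ht⟩ := hpre
  have h0 := treeMRCA_prefix_leaf _ _ hl0
  have h1 := treeMRCA_prefix_leaf _ _ hl1
  rw [← ht] at h0 h1
  rw [List.append_assoc] at h0 h1
  have h0' : t <+: 0 :: x0 := by
    have := (List.prefix_append_right_inj (List.replicate n 0)).mp h0
    simpa using this
  have h1' : t <+: 1 :: x1 := by
    have := (List.prefix_append_right_inj (List.replicate n 0)).mp h1
    simpa using this
  rcases t with _ | ⟨c, y⟩
  · rw [← ht]; simp
  · rw [List.cons_prefix_cons] at h0' h1'
    omega

lemma list_range_map_sum (d : ℕ) (f : ℕ → ℕ) :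
    ((List.range d).map f).sum = ∑ i ∈ Finset.range d, f i := by
  induction d with
  | zero => simp
  | succ m ih => rw [List.range_succ, Finset.sum_range_succ]; simp [ih]

lemma sum_getD (l : List ℕ) : ∑ i ∈ Finset.range l.length, l.getD i 0 = l.sum := by
  induction l with
  | nil => simp
  | cons a t ih =>
    rw [List.length_cons, Finset.sum_range_succ']
    simp only [List.getD_cons_succ, List.getD_cons_zero, List.sum_cons]
    rw [ih, Nat.add_comm]

lemma child_mem_buildTree (n d : ℕ) (S : ℕ → Finset (List ℕ))
    (hS : ∀ i < d, IsPlanarTree (S i)) (i : ℕ) :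
    List.replicate n 0 ++ [i] ∈ buildTree n d S ↔ i < d := by
  rw [mem_buildTree]
  constructor
  · rintro (hc | ⟨j, hj, y, hy, heq⟩)
    · exfalso
      have hle := hc.length_le
      simp only [List.length_append, List.length_replicate, List.length_cons] at hle
      omega
    · rw [List.append_right_inj] at heq
      simp only [List.cons.injEq] at heq
      obtain ⟨rfl, rfl⟩ := heq
      exact hj
  · intro hid
    exact Or.inr ⟨i, hid, [], (hS i hid).1, rfl⟩

lemma buildTree_congr (n d : ℕ) (S S' : ℕ → Finset (List ℕ)) (h : ∀ i < d, S i = S' i) :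
    buildTree n d S = buildTree n d S' := by
  unfold buildTree
  congr 1
  refine Finset.biUnion_congr rfl fun i hi => ?_
  rw [h i (Finset.mem_range.mp hi)]

/-- Number of children of the MRCA. -/
noncomputable def degOf (τ : Finset (List ℕ)) (h : IsPlanarTree τ) : ℕ := (h.2.2 (treeMRCA τ)).choose

lemma degOf_spec (τ : Finset (List ℕ)) (h : IsPlanarTree τ) :
    ∀ i, treeMRCA τ ++ [i] ∈ τ ↔ i < degOf τ h := (h.2.2 (treeMRCA τ)).choose_spec

lemma two_le_degOf (τ : Finset (List ℕ)) (h : IsPlanarTree τ) (hcard : 2 ≤ (leavesOf τ).card) :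
    2 ≤ degOf τ h := by
  obtain ⟨a, b, hab, ha, hb⟩ := exists_two_children τ h hcard
  rw [degOf_spec τ h] at ha hb
  omega

/-- The composition recording the number of leaves in each subtree at the MRCA. -/
noncomputable def compOf (τ : Finset (List ℕ)) (h : IsPlanarTree τ) : List ℕ :=
  (List.range (degOf τ h)).map fun i => (leavesOf (subtreeAt τ (treeMRCA τ ++ [i]))).card

lemma compOf_length (τ : Finset (List ℕ)) (h : IsPlanarTree τ) :
    (compOf τ h).length = degOf τ h := by simp [compOf]

lemma compOf_get (τ : Finset (List ℕ)) (h : IsPlanarTree τ) (i : ℕ)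
    (hi : i < (compOf τ h).length) :
    (compOf τ h).get ⟨i, hi⟩ = (leavesOf (subtreeAt τ (treeMRCA τ ++ [i]))).card := by
  simp [compOf]

lemma subtree_leaves_nonempty (τ : Finset (List ℕ)) (h : IsPlanarTree τ) (u : List ℕ)
    (hu : u ∈ τ) : (leavesOf (subtreeAt τ u)).Nonempty := by
  obtain ⟨l, hl, hpre⟩ := exists_leaf_above τ u (h.2.1 u u (List.prefix_refl u) hu)
  obtain ⟨t, rfl⟩ := hpre
  exact ⟨t, (leaf_subtreeAt τ u t hu).mpr hl⟩

lemma reconstruct (τ : Finset (List ℕ)) (h : IsPlanarTree τ) (hcard : 2 ≤ (leavesOf τ).card) :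
    buildTree (treeMRCA τ).length (degOf τ h) (fun i => subtreeAt τ (treeMRCA τ ++ [i])) = τ := by
  have hne : (leavesOf τ).Nonempty := Finset.card_pos.mp (by omega)
  have hw : treeMRCA τ ∈ τ := treeMRCA_mem τ h hne
  have hrep := treeMRCA_replicate τ h hcard
  ext v
  rw [mem_buildTree]
  constructor
  · rintro (hp | ⟨i, hi, x, hx, rfl⟩)
    · exact h.2.1 _ _ (by rwa [← hrep] at hp) hw
    · rw [mem_subtreeAt] at hx
      rw [← hrep]
      simpa using hx
  · intro hv
    rcases mem_tree_cases τ hne v hv with hp | ⟨i, r, rfl⟩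
    · exact Or.inl (by rwa [hrep] at hp)
    · refine Or.inr ⟨i, ?_, r, ?_, by conv_lhs => rw [hrep]⟩
      · rw [← degOf_spec τ h]
        exact h.2.1 _ _ ⟨r, by simp⟩ hv
      · rw [mem_subtreeAt]
        simpa using hv

lemma sigmaExt (k : ℕ)
    (x y : Σ c : ConsecComposition k, ℕ × ∀ i : Fin c.1.length, PTree (c.1.get i))
    (h1 : x.1.1 = y.1.1) (h2 : x.2.1 = y.2.1)
    (h3 : ∀ (i : ℕ) (hi : i < x.1.1.length) (hi' : i < y.1.1.length),
      (x.2.2 ⟨i, hi⟩).1 = (y.2.2 ⟨i, hi'⟩).1) : x = y := by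
  obtain ⟨⟨l, p⟩, n, σ⟩ := x
  obtain ⟨⟨l', p'⟩, n', σ'⟩ := y
  dsimp at h1 h2 h3
  subst h1
  subst h2
  have hp : p = p' := Subsingleton.elim _ _
  subst hp
  have hσ : σ = σ' := funext fun i => Subtype.ext (h3 i.1 i.2 i.2)
  rw [hσ]

/-- The forward map of the decomposition. -/
noncomputable def fwd (k : ℕ) (hk : 2 ≤ k) (τ : PTree k) :
    Σ c : ConsecComposition k, ℕ × ∀ i : Fin c.1.length, PTree (c.1.get i) :=
  ⟨⟨compOf τ.1 τ.2.1, by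
      intro x hx
      simp only [compOf, List.mem_map, List.mem_range] at hx
      obtain ⟨i, hi, rfl⟩ := hx
      exact Finset.card_pos.mpr (subtree_leaves_nonempty τ.1 τ.2.1 _
        ((degOf_spec τ.1 τ.2.1 i).mpr hi)),
    by
      rw [compOf, list_range_map_sum, ← card_leaves_eq_sum τ.1 τ.2.1
        (by rw [τ.2.2]; exact hk) _ (degOf_spec τ.1 τ.2.1)]
      exact τ.2.2,
    by
      rw [compOf_length]
      exact two_le_degOf τ.1 τ.2.1 (by rw [τ.2.2]; exact hk)⟩,
   (treeMRCA τ.1).length,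
   fun i =>
    ⟨subtreeAt τ.1 (treeMRCA τ.1 ++ [i.1]),
     isPlanarTree_subtreeAt τ.1 τ.2.1 _
       ((degOf_spec τ.1 τ.2.1 i.1).mpr (by simpa using (compOf_length τ.1 τ.2.1) ▸ i.2)),
     (compOf_get τ.1 τ.2.1 i.1 i.2).symm⟩⟩

/-- The subtree family of a point of the codomain. -/
noncomputable def SOf (k : ℕ) (x : Σ c : ConsecComposition k, ℕ × ∀ i : Fin c.1.length, PTree (c.1.get i)) :
    ℕ → Finset (List ℕ) :=
  fun i => if h : i < x.1.1.length then (x.2.2 ⟨i, h⟩).1 else ∅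

lemma SOf_planar (k : ℕ) (x : Σ c : ConsecComposition k, ℕ × ∀ i : Fin c.1.length, PTree (c.1.get i)) :
    ∀ i < x.1.1.length, IsPlanarTree (SOf k x i) := by
  intro i hi
  rw [SOf, dif_pos hi]
  exact (x.2.2 ⟨i, hi⟩).2.1

lemma SOf_card (k : ℕ) (x : Σ c : ConsecComposition k, ℕ × ∀ i : Fin c.1.length, PTree (c.1.get i))
    (i : ℕ) (hi : i < x.1.1.length) :
    (leavesOf (SOf k x i)).card = x.1.1.getD i 0 := by
  rw [SOf, dif_pos hi, (x.2.2 ⟨i, hi⟩).2.2, List.getD_eq_getElem _ _ hi]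
  rfl

/-- The backward map of the decomposition. -/
noncomputable def bwd (k : ℕ) (hk : 2 ≤ k)
    (x : Σ c : ConsecComposition k, ℕ × ∀ i : Fin c.1.length, PTree (c.1.get i)) : PTree k :=
  ⟨buildTree x.2.1 x.1.1.length (SOf k x),
   isPlanarTree_buildTree _ _ _ (SOf_planar k x) (by have := x.1.2.2.2; omega),
   by
    rw [card_leaves_buildTree _ _ _ (SOf_planar k x) (by have := x.1.2.2.2; omega)]
    rw [Finset.sum_congr rfl fun i hi => SOf_card k x i (Finset.mem_range.mp hi)]
    rw [sum_getD]
    exact x.1.2.2.1⟩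

lemma fwd_bwd (k : ℕ) (hk : 2 ≤ k)
    (x : Σ c : ConsecComposition k, ℕ × ∀ i : Fin c.1.length, PTree (c.1.get i)) :
    fwd k hk (bwd k hk x) = x := by
  have hlen2 : 2 ≤ x.1.1.length := x.1.2.2.2
  have hS := SOf_planar k x
  have hne : ∀ i < x.1.1.length, (leavesOf (SOf k x i)).Nonempty := by
    intro i hi
    refine Finset.card_pos.mp ?_
    rw [SOf_card k x i hi, List.getD_eq_getElem _ _ hi]
    exact x.1.2.1 _ (List.getElem_mem _)
  have hm : treeMRCA (bwd k hk x).1 = List.replicate x.2.1 0 :=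
    treeMRCA_buildTree _ _ _ hS hlen2 hne
  have hchild : ∀ i, treeMRCA (bwd k hk x).1 ++ [i] ∈ (bwd k hk x).1 ↔ i < x.1.1.length := by
    intro i
    rw [hm]
    exact child_mem_buildTree _ _ _ hS i
  have hdeg : degOf (bwd k hk x).1 (bwd k hk x).2.1 = x.1.1.length := by
    have h2 : ∀ i, i < degOf (bwd k hk x).1 (bwd k hk x).2.1 ↔ i < x.1.1.length :=
      fun i => (degOf_spec (bwd k hk x).1 (bwd k hk x).2.1 i).symm.trans (hchild i)
    have ha := h2 (degOf (bwd k hk x).1 (bwd k hk x).2.1)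
    have hb := h2 x.1.1.length
    omega
  have hsub : ∀ i < x.1.1.length,
      subtreeAt (bwd k hk x).1 (treeMRCA (bwd k hk x).1 ++ [i]) = SOf k x i := by
    intro i hi
    rw [hm]
    exact subtreeAt_buildTree _ _ _ i hi
  refine sigmaExt k _ _ ?_ ?_ ?_
  · show compOf (bwd k hk x).1 (bwd k hk x).2.1 = x.1.1
    apply List.ext_getElem
    · rw [compOf_length, hdeg]
    · intro i h1 h2
      have hc := compOf_get (bwd k hk x).1 (bwd k hk x).2.1 i h1
      rw [List.get_eq_getElem] at hc
      rw [hc, hsub i h2, SOf_card k x i h2, List.getD_eq_getElem _ _ h2]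
  · show (treeMRCA (bwd k hk x).1).length = x.2.1
    rw [hm, List.length_replicate]
  · intro i hi hi'
    show subtreeAt (bwd k hk x).1 (treeMRCA (bwd k hk x).1 ++ [i]) = (x.2.2 ⟨i, hi'⟩).1
    rw [hsub i hi', SOf, dif_pos hi']

lemma bwd_fwd (k : ℕ) (hk : 2 ≤ k) (τ : PTree k) : bwd k hk (fwd k hk τ) = τ := by
  apply Subtype.ext
  show buildTree (treeMRCA τ.1).length (compOf τ.1 τ.2.1).length (SOf k (fwd k hk τ)) = τ.1
  rw [buildTree_congr _ _ _ (fun i => subtreeAt τ.1 (treeMRCA τ.1 ++ [i]))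
    (fun i hi => by
      rw [SOf, dif_pos (show i < ((fwd k hk τ).1.1 : List ℕ).length from hi)]
      rfl)]
  rw [compOf_length]
  exact reconstruct τ.1 τ.2.1 (by rw [τ.2.2]; exact hk)

/-- **Recursive decomposition of a planar tree at its first branch point.**
The map sending a planar tree `τ` with `k ≥ 2` leaves to `(|w|, (S₁(τ), …, S_{|π|}(τ)))`,
where `w` is the MRCA of all leaves, `π = π(τ)` the consecutive-block partition of the leaf
indices at `w` (encoded by the composition of block sizes), and `Sᵢ(τ)` the subtree attached
to the `i`-th child of `w`, is a bijection onto the disjoint union, over such partitions,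
of `ℕ × (T_{|π₁|} × ⋯ × T_{|π_{|π|}|})`. -/
theorem first_branch_point_bijection (k : ℕ) (hk : 2 ≤ k) :
    ∃ e : PTree k ≃ Σ c : ConsecComposition k, ℕ × (∀ i : Fin c.1.length, PTree (c.1.get i)),
      ∀ τ : PTree k,
        (e τ).2.1 = (treeMRCA τ.1).length ∧
        ∀ i : Fin (e τ).1.1.length,
          ((e τ).2.2 i).1 = subtreeAt τ.1 (treeMRCA τ.1 ++ [i.1]) := by
  exact ⟨⟨fwd k hk, bwd k hk, bwd_fwd k hk, fwd_bwd k hk⟩, fun τ => ⟨rfl, fun i => rfl⟩⟩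

end
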